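/- arXiv:1301.0104 — 3 statements merged into one kernel-verified Lean document; each statement's English description precedes it below -/
import Mathlib

section
/- Let ‖·‖_J and ‖·‖_M be norms on ℝⁿ, β_J, β_M < 1 constants, and A, B, D linear maps on ℝⁿ with ‖A y‖_J ≤ β_J ‖y‖_J and ‖B y‖_M ≤ β_M ‖y‖_M for all y. Then there exist α ∈ (0,1) and β < 1 such that the block lower-triangular map T(z_J, z_M) = (A z_J, D z_J + B z_M) satisfies α‖A z_J‖_J + (1−α)‖D z_J + B z_M‖_M ≤ β (α‖z_J‖_J + (1−α)‖z_M‖_M) for all (z_J, z_M) ∈ ℝⁿ × ℝⁿ; i.e., T is a contraction in the α-weighted norm ‖z‖_α = α‖z_J‖_J + (1−α)‖z_M‖_M. -/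
lemma norm_compare (n : ℕ) (N : (Fin n → ℝ) → ℝ)
    (hadd : ∀ u v, N (u + v) ≤ N u + N v)
    (hsmul : ∀ (c : ℝ) u, N (c • u) = |c| * N u)
    (hdef : ∀ u, N u = 0 → u = 0) :
    ∃ c C : ℝ, 0 < c ∧ 0 ≤ C ∧ ∀ u, c * ‖u‖ ≤ N u ∧ N u ≤ C * ‖u‖ := by
  have h0 : N 0 = 0 := by
    have := hsmul 0 0
    simpa using this
  have hneg : ∀ u, N (-u) = N u := by
    intro u
    have := hsmul (-1) u
    simpa using this
  have hnonneg : ∀ u, 0 ≤ N u := by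
    intro u
    have h := hadd u (-u)
    rw [add_neg_cancel, h0, hneg] at h
    linarith
  -- upper bound
  set C : ℝ := ∑ i : Fin n, N (Pi.single i 1) with hC
  have hCnn : 0 ≤ C := Finset.sum_nonneg fun i _ => hnonneg _
  have hupper : ∀ u, N u ≤ C * ‖u‖ := by
    intro u
    have hu : u = ∑ i : Fin n, u i • (Pi.single i 1 : Fin n → ℝ) := by
      ext j
      simp [Finset.sum_apply, Pi.single_apply, mul_comm]
    calc N u = N (∑ i : Fin n, u i • (Pi.single i 1 : Fin n → ℝ)) := by rw [← hu]
      _ ≤ ∑ i : Fin n, N (u i • (Pi.single i 1 : Fin n → ℝ)) :=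
          Finset.le_sum_of_subadditive N h0.le hadd _ _
      _ = ∑ i : Fin n, |u i| * N (Pi.single i 1 : Fin n → ℝ) := by
          simp [hsmul]
      _ ≤ ∑ i : Fin n, ‖u‖ * N (Pi.single i 1 : Fin n → ℝ) := by
          apply Finset.sum_le_sum
          intro i _
          exact mul_le_mul_of_nonneg_right
            (by simpa using norm_le_pi_norm u i) (hnonneg _)
      _ = C * ‖u‖ := by rw [← Finset.mul_sum, hC, mul_comm]
  -- continuity
  have hlip : ∀ u v, |N u - N v| ≤ C * ‖u - v‖ := by
    intro u v
    rw [abs_sub_le_iff]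
    constructor
    · have := hadd (u - v) v
      rw [sub_add_cancel] at this
      have := hupper (u - v)
      linarith [hadd (u - v) v, hupper (u - v)]
    · have h1 := hadd (v - u) u
      rw [sub_add_cancel] at h1
      have h2 := hupper (v - u)
      rw [norm_sub_rev] at h2
      linarith
  have hcont : Continuous N := by
    apply continuous_iff_continuousAt.2
    intro x
    rw [Metric.continuousAt_iff]
    intro ε hε
    refine ⟨ε / (C + 1), by positivity, fun y hy => ?_⟩
    have := hlip y x
    have hd : dist y x = ‖y - x‖ := by rw [dist_eq_norm]
    rw [Real.dist_eq]
    have hC1 : C * ‖y - x‖ ≤ (C + 1) * ‖y - x‖ := by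
      nlinarith [norm_nonneg (y - x)]
    have : |N y - N x| < ε := by
      calc |N y - N x| ≤ C * ‖y - x‖ := hlip y x
        _ ≤ (C + 1) * ‖y - x‖ := hC1
        _ < (C + 1) * (ε / (C + 1)) := by
            apply mul_lt_mul_of_pos_left _ (by positivity)
            rwa [← hd]
        _ = ε := by field_simp
    exact this
  by_cases hn : ∀ u : Fin n → ℝ, u = 0
  · refine ⟨1, C, one_pos, hCnn, fun u => ?_⟩
    rw [hn u]
    simp [h0]
  -- nontrivial case: sphere nonempty and compact
  · push_neg at hn
    obtain ⟨u0, hu0⟩ := hn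
    have hsphere : (Metric.sphere (0 : Fin n → ℝ) 1).Nonempty := by
      refine ⟨‖u0‖⁻¹ • u0, ?_⟩
      simp only [Metric.mem_sphere, dist_zero_right]
      rw [norm_smul, norm_inv, norm_norm]
      field_simp [norm_ne_zero_iff.2 hu0]
    have hcomp : IsCompact (Metric.sphere (0 : Fin n → ℝ) 1) :=
      isCompact_sphere 0 1
    obtain ⟨x0, hx0mem, hx0min⟩ := hcomp.exists_isMinOn hsphere hcont.continuousOn
    have hx0norm : ‖x0‖ = 1 := by simpa [dist_zero_right] using hx0mem
    have hx0ne : x0 ≠ 0 := by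
      intro h
      rw [h] at hx0norm
      simp at hx0norm
    have hc : 0 < N x0 := by
      rcases lt_or_eq_of_le (hnonneg x0) with h | h
      · exact h
      · exact absurd (hdef x0 h.symm) hx0ne
    refine ⟨N x0, C, hc, hCnn, fun u => ⟨?_, hupper u⟩⟩
    by_cases hu : u = 0
    · simp [hu, h0]
    · have hun : (0:ℝ) < ‖u‖ := norm_pos_iff.2 hu
      have hmem : ‖u‖⁻¹ • u ∈ Metric.sphere (0 : Fin n → ℝ) 1 := by
        simp only [Metric.mem_sphere, dist_zero_right]
        rw [norm_smul, norm_inv, norm_norm]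
        field_simp
      have := hx0min hmem
      have h2 : N x0 ≤ N (‖u‖⁻¹ • u) := this
      rw [hsmul] at h2
      rw [abs_of_pos (inv_pos.2 hun)] at h2
      calc N x0 * ‖u‖ ≤ (‖u‖⁻¹ * N u) * ‖u‖ :=
            mul_le_mul_of_nonneg_right h2 (le_of_lt hun)
        _ = N u := by field_simp

/-- Given norms `‖·‖_J`, `‖·‖_M` on `ℝⁿ`, constants `β_J, β_M < 1`,
and linear maps `A, B, D` with `‖A y‖_J ≤ β_J ‖y‖_J` and `‖B y‖_M ≤ β_M ‖y‖_M`,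
there exist `α ∈ (0,1)` and `β < 1` such that the block lower-triangular map
`T(z_J, z_M) = (A z_J, D z_J + B z_M)` is a `β`-contraction in the `α`-weighted
norm `‖z‖_α = α ‖z_J‖_J + (1-α) ‖z_M‖_M`. -/
theorem stmt_4 (n : ℕ)
    (nJ nM : (Fin n → ℝ) → ℝ)
    (hJ_add : ∀ u v, nJ (u + v) ≤ nJ u + nJ v)
    (hJ_smul : ∀ (c : ℝ) u, nJ (c • u) = |c| * nJ u)
    (hJ_def : ∀ u, nJ u = 0 → u = 0)
    (hM_add : ∀ u v, nM (u + v) ≤ nM u + nM v)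
    (hM_smul : ∀ (c : ℝ) u, nM (c • u) = |c| * nM u)
    (hM_def : ∀ u, nM u = 0 → u = 0)
    (A B D : (Fin n → ℝ) →ₗ[ℝ] (Fin n → ℝ))
    (βJ βM : ℝ) (hβJ : βJ < 1) (hβM : βM < 1)
    (hA : ∀ y, nJ (A y) ≤ βJ * nJ y)
    (hB : ∀ y, nM (B y) ≤ βM * nM y) :
    ∃ α β : ℝ, 0 < α ∧ α < 1 ∧ β < 1 ∧
      ∀ zJ zM : Fin n → ℝ,
        α * nJ (A zJ) + (1 - α) * nM (D zJ + B zM) ≤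
          β * (α * nJ zJ + (1 - α) * nM zM) := by
  obtain ⟨cJ, CJ, hcJ, hCJ, hJcomp⟩ := norm_compare n nJ hJ_add hJ_smul hJ_def
  obtain ⟨cM, CM, hcM, hCM, hMcomp⟩ := norm_compare n nM hM_add hM_smul hM_def
  -- nonnegativity
  have hJnn : ∀ u, 0 ≤ nJ u := fun u =>
    le_trans (by positivity) ((hJcomp u).1)
  have hMnn : ∀ u, 0 ≤ nM u := fun u =>
    le_trans (by positivity) ((hMcomp u).1)
  -- D is bounded: nM (D u) ≤ C * nJ u
  have hDcont : Continuous D := D.continuous_of_finiteDimensional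
  set Dc : (Fin n → ℝ) →L[ℝ] (Fin n → ℝ) := ⟨D, hDcont⟩ with hDc
  set C : ℝ := CM * ‖Dc‖ / cJ with hCdef
  have hCnn : 0 ≤ C := by positivity
  have hD : ∀ u, nM (D u) ≤ C * nJ u := by
    intro u
    have h1 : nM (D u) ≤ CM * ‖D u‖ := (hMcomp (D u)).2
    have h2 : ‖Dc u‖ ≤ ‖Dc‖ * ‖u‖ := Dc.le_opNorm u
    have h3 : cJ * ‖u‖ ≤ nJ u := (hJcomp u).1
    have h4 : ‖u‖ ≤ nJ u / cJ := by
      rw [le_div_iff₀ hcJ]; linarith [h3]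
    have h2' : ‖D u‖ ≤ ‖Dc‖ * (nJ u / cJ) := by
      calc ‖D u‖ = ‖Dc u‖ := rfl
        _ ≤ ‖Dc‖ * ‖u‖ := h2
        _ ≤ ‖Dc‖ * (nJ u / cJ) :=
            mul_le_mul_of_nonneg_left h4 (norm_nonneg _)
    calc nM (D u) ≤ CM * ‖D u‖ := h1
      _ ≤ CM * (‖Dc‖ * (nJ u / cJ)) := mul_le_mul_of_nonneg_left h2' hCM
      _ = C * nJ u := by rw [hCdef]; ring
  -- choose constants
  set b : ℝ := max (max βJ βM) 0 with hb
  have hb0 : 0 ≤ b := le_max_right _ _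
  have hb1 : b < 1 := by
    simp only [hb, max_lt_iff]
    exact ⟨⟨hβJ, hβM⟩, one_pos⟩
  set ε : ℝ := (1 - b) / 2 with hε
  have hε0 : 0 < ε := by simp only [hε]; linarith
  set β : ℝ := b + ε with hβdef
  have hβ1 : β < 1 := by simp only [hβdef, hε]; linarith
  set α : ℝ := (C + 1) / (C + 1 + ε) with hα
  have hden : 0 < C + 1 + ε := by linarith
  have hα0 : 0 < α := by positivity
  have hα1 : α < 1 := by
    rw [hα, div_lt_one hden]; linarith
  have h1mα : 1 - α = ε / (C + 1 + ε) := by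
    rw [hα]; field_simp; ring
  have hkey : (1 - α) * C ≤ ε * α := by
    rw [h1mα, hα]
    have h1 : ε / (C + 1 + ε) * C = ε * C / (C + 1 + ε) := by ring
    have h2 : ε * ((C + 1) / (C + 1 + ε)) = ε * (C + 1) / (C + 1 + ε) := by ring
    rw [h1, h2]
    gcongr
    nlinarith [hε0]
  refine ⟨α, β, hα0, hα1, hβ1, fun zJ zM => ?_⟩
  have hJz := hJnn zJ
  have hMz := hMnn zM
  have e1 : nJ (A zJ) ≤ βJ * nJ zJ := hA zJ
  have e2 : nM (D zJ + B zM) ≤ C * nJ zJ + βM * nM zM := by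
    calc nM (D zJ + B zM) ≤ nM (D zJ) + nM (B zM) := hM_add _ _
      _ ≤ C * nJ zJ + βM * nM zM := add_le_add (hD zJ) (hB zM)
  have hβJb : βJ ≤ b := le_trans (le_max_left _ _) (le_max_left _ _)
  have hβMb : βM ≤ b := le_trans (le_max_right _ _) (le_max_left _ _)
  have h1mα0 : 0 < 1 - α := by linarith
  nlinarith [mul_le_mul_of_nonneg_left e1 hα0.le,
    mul_le_mul_of_nonneg_left e2 h1mα0.le,
    mul_le_mul_of_nonneg_right hkey hJz,
    mul_nonneg hα0.le hJz, mul_nonneg h1mα0.le hMz,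
    mul_le_mul_of_nonneg_right hβJb (mul_nonneg hα0.le hJz),
    mul_le_mul_of_nonneg_right hβMb (mul_nonneg h1mα0.le hMz)]
end

section
/- Let Q = diag(q) with q(x) > 0, P a substochastic n×n matrix with q = ζ₀ᵀ + qᵀP (occupancy equation) arising from a proper policy, and Φ a full-column-rank n×l matrix. Then the matrix ΦᵀQ(I − P)Φ is invertible. -/
open Matrix

lemma quad_identity (n : ℕ) (P : Matrix (Fin n) (Fin n) ℝ) (q ζ₀ v : Fin n → ℝ)
    (hocc : ∀ y, q y = ζ₀ y + P.vecMul q y) :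
    v ⬝ᵥ (Matrix.diagonal q * (1 - P)).mulVec v
      = (∑ x, ∑ y, q x * P x y * (v x - v y)^2)/2
        + (∑ x, (v x)^2 * q x * (1 - ∑ y, P x y))/2
        + (∑ y, (v y)^2 * ζ₀ y)/2 := by
  have hz : ∀ y, ζ₀ y = q y - ∑ x, q x * P x y := by
    intro y; have := hocc y; simp [vecMul, dotProduct] at this; linarith
  simp only [hz, dotProduct, mulVec, Matrix.mul_apply, Matrix.sub_apply, Matrix.one_apply,
    diagonal_apply, Finset.mul_sum, Finset.sum_sub_distrib, mul_sub, sub_mul]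
  simp [Finset.sum_ite_eq, Finset.mul_sum, Finset.sum_sub_distrib, mul_sub, sub_mul]
  have e0 : (∑ x : Fin n, v x * (q x * v x)) = ∑ x : Fin n, v x ^ 2 * q x := by
    apply Finset.sum_congr rfl; intros; ring
  have e1 : (∑ x : Fin n, ∑ y : Fin n, v x * (q x * P x y * v y))
      = ∑ x : Fin n, ∑ y : Fin n, q x * P x y * (v x * v y) := by
    apply Finset.sum_congr rfl; intros; apply Finset.sum_congr rfl
    intros; ring
  have e2 : (∑ x : Fin n, ∑ y : Fin n, q x * P x y * (v x - v y) ^ 2)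
      = (∑ x : Fin n, ∑ y : Fin n, q x * P x y * v x ^ 2)
        - 2 * (∑ x : Fin n, ∑ y : Fin n, q x * P x y * (v x * v y))
        + (∑ x : Fin n, ∑ y : Fin n, q x * P x y * v y ^ 2) := by
    rw [Finset.mul_sum, ← Finset.sum_sub_distrib, ← Finset.sum_add_distrib]
    apply Finset.sum_congr rfl; intros
    rw [Finset.mul_sum, ← Finset.sum_sub_distrib, ← Finset.sum_add_distrib]
    apply Finset.sum_congr rfl; intros; ring
  have e3 : (∑ x : Fin n, ∑ y : Fin n, v x ^ 2 * q x * P x y)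
      = ∑ x : Fin n, ∑ y : Fin n, q x * P x y * v x ^ 2 := by
    apply Finset.sum_congr rfl; intros; apply Finset.sum_congr rfl; intros; ring
  have e4 : (∑ x : Fin n, ∑ y : Fin n, v x ^ 2 * (q y * P y x))
      = ∑ x : Fin n, ∑ y : Fin n, q x * P x y * v y ^ 2 := by
    rw [Finset.sum_comm]; apply Finset.sum_congr rfl; intros; apply Finset.sum_congr rfl
    intros; ring
  rw [e0, e1, e2, e3, e4]; ring

lemma quad_pos (n : ℕ) (P : Matrix (Fin n) (Fin n) ℝ) (q ζ₀ : Fin n → ℝ)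
    (hP0 : ∀ x y, 0 ≤ P x y)
    (hP1 : ∀ x, ∑ y, P x y ≤ 1)
    (hproper : ∀ x, ∑ y, (P ^ n) x y < 1)
    (hζ0 : ∀ x, 0 ≤ ζ₀ x)
    (hq_pos : ∀ x, 0 < q x)
    (hocc : ∀ y, q y = ζ₀ y + P.vecMul q y)
    (v : Fin n → ℝ) (hv : v ≠ 0) :
    0 < v ⬝ᵥ (Matrix.diagonal q * (1 - P)).mulVec v := by
  rw [quad_identity n P q ζ₀ v hocc]
  have hf : ∀ x ∈ Finset.univ, (0:ℝ) ≤ ∑ y, q x * P x y * (v x - v y)^2 := by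
    intro x _; apply Finset.sum_nonneg; intro y _
    have := hq_pos x; have := hP0 x y; positivity
  have hg : ∀ x ∈ Finset.univ, (0:ℝ) ≤ (v x)^2 * q x * (1 - ∑ y, P x y) := by
    intro x _
    have h1 : (0:ℝ) ≤ 1 - ∑ y, P x y := by linarith [hP1 x]
    have := hq_pos x; positivity
  have hh : ∀ y ∈ Finset.univ, (0:ℝ) ≤ (v y)^2 * ζ₀ y := by
    intro y _; have := hζ0 y; positivity
  have S1 := Finset.sum_nonneg hf
  have S2 := Finset.sum_nonneg hg
  have S3 := Finset.sum_nonneg hh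
  by_contra hle
  push_neg at hle
  have hS1 : (∑ x, ∑ y, q x * P x y * (v x - v y)^2) = 0 := le_antisymm (by linarith) S1
  have hS2 : (∑ x, (v x)^2 * q x * (1 - ∑ y, P x y)) = 0 := le_antisymm (by linarith) S2
  -- extract pointwise facts
  have hA : ∀ x y, P x y ≠ 0 → v x = v y := by
    intro x y hPxy
    have h1 := (Finset.sum_eq_zero_iff_of_nonneg hf).mp hS1 x (Finset.mem_univ x)
    have h2 := (Finset.sum_eq_zero_iff_of_nonneg (fun y _ => by
      have := hq_pos x; have := hP0 x y; positivity)).mp h1 y (Finset.mem_univ y)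
    have hq := (hq_pos x).ne'
    have hP : 0 < P x y := lt_of_le_of_ne (hP0 x y) (Ne.symm hPxy)
    have : (v x - v y)^2 = 0 := by
      rcases mul_eq_zero.mp h2 with h | h
      · rcases mul_eq_zero.mp h with h | h
        · exact absurd h hq
        · exact absurd h hPxy
      · exact h
    have := pow_eq_zero_iff (n := 2) (by norm_num) |>.mp this
    linarith [sub_eq_zero.mp this]
  have hB : ∀ x, v x ≠ 0 → ∑ y, P x y = 1 := by
    intro x hvx
    have h1 := (Finset.sum_eq_zero_iff_of_nonneg hg).mp hS2 x (Finset.mem_univ x)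
    have hvx2 : (v x)^2 ≠ 0 := pow_ne_zero 2 hvx
    have hq := (hq_pos x).ne'
    rcases mul_eq_zero.mp h1 with h | h
    · rcases mul_eq_zero.mp h with h | h
      · exact absurd h hvx2
      · exact absurd h hq
    · linarith
  -- entries of powers are nonneg
  have hPk0 : ∀ k x y, 0 ≤ (P ^ k) x y := by
    intro k
    induction k with
    | zero => intro x y; simp [Matrix.one_apply]; split <;> norm_num
    | succ k ih =>
      intro x y
      rw [pow_succ']
      rw [Matrix.mul_apply]
      exact Finset.sum_nonneg fun z _ => mul_nonneg (hP0 x z) (ih z y)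
  -- inductive claim
  have main : ∀ k x, v x ≠ 0 →
      (∀ y, (P ^ k) x y ≠ 0 → v y = v x) ∧ (∑ y, (P ^ k) x y = 1) := by
    intro k
    induction k with
    | zero =>
      intro x hvx
      constructor
      · intro y hy
        simp [Matrix.one_apply] at hy
        subst hy
        rfl
      · simp [Matrix.one_apply]
    | succ k ih =>
      intro x hvx
      have hstep : ∀ y, (P ^ (k+1)) x y = ∑ z, P x z * (P ^ k) z y := by
        intro y; rw [pow_succ', Matrix.mul_apply]
      constructor
      · intro y hy
        rw [hstep] at hy
        obtain ⟨z, _, hz⟩ := Finset.exists_ne_zero_of_sum_ne_zero hy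
        have hPz : P x z ≠ 0 := fun h => hz (by rw [h]; ring)
        have hPkz : (P ^ k) z y ≠ 0 := fun h => hz (by rw [h]; ring)
        have hvz : v z = v x := (hA x z hPz).symm
        have hvz' : v z ≠ 0 := by rw [hvz]; exact hvx
        have := (ih z hvz').1 y hPkz
        rw [this, hvz]
      · have : (∑ y, (P ^ (k+1)) x y) = ∑ z, P x z * ∑ y, (P ^ k) z y := by
          simp only [hstep]
          rw [Finset.sum_comm]
          apply Finset.sum_congr rfl
          intro z _
          rw [Finset.mul_sum]
        rw [this]
        have : (∑ z, P x z * ∑ y, (P ^ k) z y) = ∑ z, P x z := by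
          apply Finset.sum_congr rfl
          intro z _
          by_cases hPz : P x z = 0
          · rw [hPz]; ring
          · have hvz : v z = v x := (hA x z hPz).symm
            have hvz' : v z ≠ 0 := by rw [hvz]; exact hvx
            rw [(ih z hvz').2, mul_one]
        rw [this]
        exact hB x hvx
  obtain ⟨x0, hx0⟩ := Function.ne_iff.mp hv
  have := (main n x0 hx0).2
  linarith [hproper x0]


/-- Let `Q = diag(q)` with `q > 0` the occupancy vector of a proper SSP
policy with initial distribution `ζ₀` (so `qᵀ = ζ₀ᵀ + qᵀ P`), `P` substochastic and
proper, and `Φ` an `n×l` matrix with linearly independent columns. Then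
`Φᵀ Q (I − P) Φ` is invertible. -/
theorem stmt_11 (n l : ℕ) (P : Matrix (Fin n) (Fin n) ℝ)
    (q ζ₀ : Fin n → ℝ)
    (hP0 : ∀ x y, 0 ≤ P x y)
    (hP1 : ∀ x, ∑ y, P x y ≤ 1)
    (hproper : ∀ x, ∑ y, (P ^ n) x y < 1)
    (hζ0 : ∀ x, 0 ≤ ζ₀ x)
    (hq_pos : ∀ x, 0 < q x)
    (hocc : ∀ y, q y = ζ₀ y + P.vecMul q y)
    (Φ : Matrix (Fin n) (Fin l) ℝ)
    (hΦ : LinearIndependent ℝ (fun j : Fin l => fun i : Fin n => Φ i j)) :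
    IsUnit (Φᵀ * Matrix.diagonal q * (1 - P) * Φ) := by
  rw [Matrix.isUnit_iff_isUnit_det, isUnit_iff_ne_zero]
  intro hdet
  obtain ⟨c, hc, hc0⟩ := Matrix.exists_mulVec_eq_zero_iff.mpr hdet
  set w := Φ.mulVec c with hw
  have hwne : w ≠ 0 := by
    intro hw0
    apply hc
    have := Fintype.linearIndependent_iff.mp hΦ c ?_
    · funext j; exact this j
    · funext i
      have : w i = 0 := by rw [hw0]; rfl
      rw [hw, mulVec, dotProduct] at this
      simp only [Finset.sum_apply, Pi.smul_apply, smul_eq_mul, Pi.zero_apply]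
      rw [← this]
      apply Finset.sum_congr rfl
      intros; ring
  have hpos := quad_pos n P q ζ₀ hP0 hP1 hproper hζ0 hq_pos hocc w hwne
  have heq : c ⬝ᵥ (Φᵀ * Matrix.diagonal q * (1 - P) * Φ).mulVec c
      = w ⬝ᵥ (Matrix.diagonal q * (1 - P)).mulVec w := by
    have hassoc : Φᵀ * Matrix.diagonal q * (1 - P) * Φ
        = Φᵀ * (Matrix.diagonal q * (1 - P) * Φ) := by
      rw [Matrix.mul_assoc, Matrix.mul_assoc, Matrix.mul_assoc]
    rw [hassoc, ← Matrix.mulVec_mulVec, Matrix.dotProduct_mulVec, Matrix.vecMul_transpose,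
      ← hw, ← Matrix.mulVec_mulVec]
  rw [hc0, dotProduct_zero] at heq
  linarith
end

section
/- Let P be a substochastic matrix of a proper SSP policy and q its positive occupancy vector satisfying qᵀ = ζ₀ᵀ + qᵀP, and let Π be the q-weighted orthogonal projection onto a subspace S of ℝⁿ. For λ ∈ (0,1), define P^{(λ)} = (1−λ) ∑_{l=0}^∞ λ^l P^{l+1}. If ‖Π P y‖_q ≤ β ‖y‖_q for all y with β < 1 (single-step contraction in the q-norm), then ‖Π P^{(λ)} y‖_q ≤ β^{(λ)} ‖y‖_q with β^{(λ)} = (1−λ)β/(1−λβ) < 1; in particular Π P^{(λ)} is a contraction in ‖·‖_q. -/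
open Matrix

/-- Let `P` be the substochastic matrix of a proper SSP policy with positive
occupancy vector `q` (`qᵀ = ζ₀ᵀ + qᵀ P`), and `Π` a linear map on `ℝⁿ` that is
nonexpansive in the `q`-weighted norm (a `q`-orthogonal projection onto a subspace).
For `λ ∈ (0,1)` define `P^{(λ)} = (1−λ) ∑_{l≥0} λ^l P^{l+1}` (entrywise). If `P` is a
`β`-contraction in `‖·‖_q` (so in particular `‖Π P y‖_q ≤ β ‖y‖_q`) with `β < 1`, then
`‖Π P^{(λ)} y‖_q ≤ β^{(λ)} ‖y‖_q` where `β^{(λ)} = (1−λ)β/(1−λβ) < 1`. -/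
theorem stmt_17 (n : ℕ) (P : Matrix (Fin n) (Fin n) ℝ)
    (q ζ₀ : Fin n → ℝ) (β lam : ℝ)
    (hP0 : ∀ x y, 0 ≤ P x y)
    (hP1 : ∀ x, ∑ y, P x y ≤ 1)
    (hζ0 : ∀ x, 0 ≤ ζ₀ x)
    (hq_pos : ∀ x, 0 < q x)
    (hocc : ∀ y, q y = ζ₀ y + P.vecMul q y)
    (hlam0 : 0 < lam) (hlam1 : lam < 1)
    (hβ0 : 0 ≤ β) (hβ1 : β < 1)
    (Pi : (Fin n → ℝ) →ₗ[ℝ] (Fin n → ℝ))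
    (hPi_proj : ∀ y, Pi (Pi y) = Pi y)
    (hPi_ne : ∀ y : Fin n → ℝ,
      Real.sqrt (∑ x, q x * Pi y x ^ 2) ≤ Real.sqrt (∑ x, q x * y x ^ 2))
    (hP_contr : ∀ y : Fin n → ℝ,
      Real.sqrt (∑ x, q x * P.mulVec y x ^ 2) ≤ β * Real.sqrt (∑ x, q x * y x ^ 2))
    (hPiP_contr : ∀ y : Fin n → ℝ,
      Real.sqrt (∑ x, q x * Pi (P.mulVec y) x ^ 2) ≤ β * Real.sqrt (∑ x, q x * y x ^ 2))
    (Plam : Matrix (Fin n) (Fin n) ℝ)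
    (hPlam : ∀ x y, HasSum (fun l : ℕ => (1 - lam) * lam ^ l * (P ^ (l + 1)) x y)
      (Plam x y)) :
    (1 - lam) * β / (1 - lam * β) < 1 ∧
      ∀ y : Fin n → ℝ,
        Real.sqrt (∑ x, q x * Pi (Plam.mulVec y) x ^ 2) ≤
          ((1 - lam) * β / (1 - lam * β)) * Real.sqrt (∑ x, q x * y x ^ 2) := by

  have hlb : lam * β < 1 := lt_of_le_of_lt (by nlinarith) hβ1
  have hlb0 : 0 < 1 - lam * β := by linarith
  constructor
  · rw [div_lt_one hlb0]; nlinarith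
  · intro y
    -- T : weighted embedding into EuclideanSpace
    set T : (Fin n → ℝ) →ₗ[ℝ] EuclideanSpace ℝ (Fin n) :=
      { toFun := fun v => WithLp.toLp 2 (fun x => Real.sqrt (q x) * v x)
        map_add' := by intro a b; ext x; simp [mul_add]
        map_smul' := by intro c a; ext x; simp [smul_eq_mul]; ring } with hT
    have hNeq : ∀ v : Fin n → ℝ, Real.sqrt (∑ x, q x * v x ^ 2) = ‖T v‖ := by
      intro v
      rw [EuclideanSpace.norm_eq]
      congr 1
      refine Finset.sum_congr rfl fun x _ => ?_
      have hxv : T v x = Real.sqrt (q x) * v x := rfl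
      rw [hxv, Real.norm_eq_abs, sq_abs, mul_pow, Real.sq_sqrt (hq_pos x).le]
    have hP_N : ∀ v : Fin n → ℝ, ‖T (P.mulVec v)‖ ≤ β * ‖T v‖ := by
      intro v; rw [← hNeq, ← hNeq]; exact hP_contr v
    have hPiP_N : ∀ v : Fin n → ℝ, ‖T (Pi (P.mulVec v))‖ ≤ β * ‖T v‖ := by
      intro v; rw [← hNeq, ← hNeq]; exact hPiP_contr v
    have hpow : ∀ (l : ℕ) (v : Fin n → ℝ), ‖T ((P ^ l).mulVec v)‖ ≤ β ^ l * ‖T v‖ := by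
      intro l
      induction l with
      | zero => intro v; simp [Matrix.one_mulVec]
      | succ l ih =>
        intro v
        have h1 : (P ^ (l + 1)).mulVec v = (P ^ l).mulVec (P.mulVec v) := by
          rw [pow_succ, ← Matrix.mulVec_mulVec]
        rw [h1]
        calc ‖T ((P ^ l).mulVec (P.mulVec v))‖ ≤ β ^ l * ‖T (P.mulVec v)‖ := ih _
          _ ≤ β ^ l * (β * ‖T v‖) := by
              exact mul_le_mul_of_nonneg_left (hP_N v) (pow_nonneg hβ0 _)
          _ = β ^ (l + 1) * ‖T v‖ := by ring
    -- Plam.mulVec y as a sum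
    have hc0 : ∀ l : ℕ, (0:ℝ) ≤ (1 - lam) * lam ^ l := fun l =>
      mul_nonneg (by linarith) (pow_nonneg hlam0.le _)
    have hsumvec : HasSum (fun l : ℕ => ((1 - lam) * lam ^ l) • ((P ^ (l + 1)).mulVec y))
        (Plam.mulVec y) := by
      rw [_root_.Pi.hasSum]
      intro x
      have : HasSum (fun l : ℕ => ∑ z, ((1 - lam) * lam ^ l * (P ^ (l + 1)) x z) * y z)
          (∑ z, Plam x z * y z) :=
        hasSum_sum fun z _ => (hPlam x z).mul_right (y z)
      have hfun : (fun l : ℕ => ∑ z, ((1 - lam) * lam ^ l * (P ^ (l + 1)) x z) * y z)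
          = fun l : ℕ => (((1 - lam) * lam ^ l) • ((P ^ (l + 1)).mulVec y)) x := by
        funext l
        show _ = ((1 - lam) * lam ^ l) * ((P ^ (l + 1)).mulVec y x)
        rw [Matrix.mulVec, dotProduct, Finset.mul_sum]
        exact Finset.sum_congr rfl fun z _ => by ring
      have hval : (∑ z, Plam x z * y z) = (Plam.mulVec y) x := rfl
      rw [hfun, hval] at this
      exact this
    -- push through T ∘ Pi, a continuous linear map
    let Φ : (Fin n → ℝ) →L[ℝ] EuclideanSpace ℝ (Fin n) :=
      LinearMap.toContinuousLinearMap (T ∘ₗ Pi)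
    have hΦ : ∀ v, Φ v = T (Pi v) := fun v => rfl
    have hsum2 : HasSum (fun l : ℕ => ((1 - lam) * lam ^ l) • Φ ((P ^ (l + 1)).mulVec y))
        (Φ (Plam.mulVec y)) := by
      have := Φ.hasSum hsumvec
      simpa using this
    -- geometric bound
    have hgs : HasSum (fun l : ℕ => (lam * β) ^ l) ((1 - lam * β)⁻¹) :=
      hasSum_geometric_of_lt_one (by positivity) hlb
    have hgs2 : HasSum (fun l : ℕ => ((1 - lam) * lam ^ l) * (β ^ (l + 1) * ‖T y‖))
        ((1 - lam) * β / (1 - lam * β) * ‖T y‖) := by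
      have h := hgs.mul_left ((1 - lam) * β * ‖T y‖)
      have e1 : (fun l : ℕ => ((1 - lam) * lam ^ l) * (β ^ (l + 1) * ‖T y‖))
          = fun i : ℕ => (1 - lam) * β * ‖T y‖ * (lam * β) ^ i := by
        funext l; rw [mul_pow]; ring
      have e2 : (1 - lam) * β / (1 - lam * β) * ‖T y‖
          = (1 - lam) * β * ‖T y‖ * (1 - lam * β)⁻¹ := by
        rw [div_eq_mul_inv]; ring
      rw [e1, e2]
      exact h
    have hbound : ∀ l : ℕ,
        ‖((1 - lam) * lam ^ l) • Φ ((P ^ (l + 1)).mulVec y)‖ ≤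
          ((1 - lam) * lam ^ l) * (β ^ (l + 1) * ‖T y‖) := by
      intro l
      rw [norm_smul, Real.norm_eq_abs, abs_of_nonneg (hc0 l)]
      refine mul_le_mul_of_nonneg_left ?_ (hc0 l)
      rw [hΦ]
      have h1 : (P ^ (l + 1)).mulVec y = P.mulVec ((P ^ l).mulVec y) := by
        rw [pow_succ', ← Matrix.mulVec_mulVec]
      rw [h1]
      calc ‖T (Pi (P.mulVec ((P ^ l).mulVec y)))‖ ≤ β * ‖T ((P ^ l).mulVec y)‖ :=
            hPiP_N _
        _ ≤ β * (β ^ l * ‖T y‖) := mul_le_mul_of_nonneg_left (hpow l y) hβ0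
        _ = β ^ (l + 1) * ‖T y‖ := by ring
    have hfinal : ‖Φ (Plam.mulVec y)‖ ≤ (1 - lam) * β / (1 - lam * β) * ‖T y‖ := by
      rw [← hsum2.tsum_eq]
      exact tsum_of_norm_bounded hgs2 hbound
    rw [hNeq, hNeq, hΦ] at *
    exact hfinal
end
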